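/- Let p, q, r be integers with p ≥ 0, q ≥ 0, r ≥ 1 and (p,q) ≠ (0,0). Suppose the polynomial f(x) = x³ − p x² + q x + r has no complex root of modulus exactly 1. Then f has exactly one complex root (counted with multiplicity) of modulus strictly less than 1 if and only if |p − r| < q + 1. -/

import Mathlib

open Polynomial

open ComplexConjugate


lemma mixed_contra (x v w q r : ℝ) (hq : 0 ≤ q) (hr : 1 ≤ r)
    (hx1 : -1 < x) (hx2 : x < 1) (hv : 1 < v) (hw : w < -1)
    (hprod : x * v * w = -r) (he2 : x * v + x * w + v * w = q) : False := by
  rcases le_or_gt x 0 with h | h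
  · have t1 : x * v ≤ 0 := by nlinarith
    have t2 : x * w + v * w < 0 := by nlinarith
    linarith
  · have t1 : x * w < 0 := mul_neg_of_pos_of_neg h (by linarith)
    have t2 : x * v + v * w < 0 := by nlinarith
    linarith

lemma cube_bound {u v w : ℝ} (h1 : -1 < u) (h2 : u < 1) (h3 : -1 < v) (h4 : v < 1)
    (h5 : -1 < w) (h6 : w < 1) : -1 < u * v * w := by
  nlinarith [mul_pos (mul_pos (by linarith : (0:ℝ) < 1+u) (by linarith : (0:ℝ) < 1+v)) (by linarith : (0:ℝ) < 1+w),
             mul_pos (mul_pos (by linarith : (0:ℝ) < 1+u) (by linarith : (0:ℝ) < 1-v)) (by linarith : (0:ℝ) < 1-w),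
             mul_pos (mul_pos (by linarith : (0:ℝ) < 1-u) (by linarith : (0:ℝ) < 1+v)) (by linarith : (0:ℝ) < 1-w),
             mul_pos (mul_pos (by linarith : (0:ℝ) < 1-u) (by linarith : (0:ℝ) < 1-v)) (by linarith : (0:ℝ) < 1+w)]

lemma aux3 (u v w q r : ℝ) (hq : 0 ≤ q) (hr : 1 ≤ r)
    (hprod : u * v * w = -r) (he2 : u * v + u * w + v * w = q)
    (hu : |u| ≠ 1) (hv : |v| ≠ 1) (hw : |w| ≠ 1) :
    (((if |u| < 1 then 1 else 0) + (if |v| < 1 then 1 else 0) + (if |w| < 1 then 1 else 0) : ℕ) = 1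
      ↔ 0 < (1-u)*(1-v)*(1-w) ∧ 0 < (1+u)*(1+v)*(1+w)) := by
  have tri : ∀ x : ℝ, |x| ≠ 1 → x < -1 ∨ (-1 < x ∧ x < 1) ∨ 1 < x := by
    intro x hx
    rcases lt_trichotomy x (-1) with h | h | h
    · exact Or.inl h
    · exact absurd (by rw [h, abs_neg, abs_one]) hx
    · rcases lt_trichotomy x 1 with h' | h' | h'
      · exact Or.inr (Or.inl ⟨h, h'⟩)
      · exact absurd (by rw [h', abs_one]) hx
      · exact Or.inr (Or.inr h')
  have iM : ∀ x : ℝ, -1 < x → x < 1 → (if |x| < 1 then (1:ℕ) else 0) = 1 :=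
    fun x h h' => if_pos (abs_lt.mpr ⟨h, h'⟩)
  have iL : ∀ x : ℝ, x < -1 → (if |x| < 1 then (1:ℕ) else 0) = 0 :=
    fun x h => if_neg (by rw [abs_lt]; rintro ⟨h1, h2⟩; linarith)
  have iR : ∀ x : ℝ, 1 < x → (if |x| < 1 then (1:ℕ) else 0) = 0 :=
    fun x h => if_neg (by rw [abs_lt]; rintro ⟨h1, h2⟩; linarith)
  rcases tri u hu with hu1 | ⟨hu1, hu2⟩ | hu1 <;>
    rcases tri v hv with hv1 | ⟨hv1, hv2⟩ | hv1 <;>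
      rcases tri w hw with hw1 | ⟨hw1, hw2⟩ | hw1
  · -- LLL
    rw [iL u hu1, iL v hv1, iL w hw1]
    constructor
    · intro h; exact absurd h (by norm_num)
    · rintro ⟨hA2, hB2⟩; exfalso; nlinarith [mul_pos_of_neg_of_neg (show 1+u < (0:ℝ) by linarith) (show 1+v < (0:ℝ) by linarith)]
  · -- LLM
    rw [iL u hu1, iL v hv1, iM w hw1 hw2]
    exact iff_of_true (by norm_num) ⟨by nlinarith [mul_pos (show (0:ℝ) < 1-u by linarith) (show (0:ℝ) < 1-v by linarith)], by nlinarith [mul_pos_of_neg_of_neg (show 1+u < (0:ℝ) by linarith) (show 1+v < (0:ℝ) by linarith)]⟩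
  · -- LLR
    rw [iL u hu1, iL v hv1, iR w hw1]
    constructor
    · intro h; exact absurd h (by norm_num)
    · rintro ⟨hA2, hB2⟩; exfalso; nlinarith [mul_pos (show (0:ℝ) < 1-u by linarith) (show (0:ℝ) < 1-v by linarith)]
  · -- LML
    rw [iL u hu1, iM v hv1 hv2, iL w hw1]
    exact iff_of_true (by norm_num) ⟨by nlinarith [mul_pos (show (0:ℝ) < 1-u by linarith) (show (0:ℝ) < 1-w by linarith)], by nlinarith [mul_pos_of_neg_of_neg (show 1+u < (0:ℝ) by linarith) (show 1+w < (0:ℝ) by linarith)]⟩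
  · -- LMM
    rw [iL u hu1, iM v hv1 hv2, iM w hw1 hw2]
    constructor
    · intro h; exact absurd h (by norm_num)
    · rintro ⟨hA2, hB2⟩; exfalso; nlinarith [mul_pos (show (0:ℝ) < 1+v by linarith) (show (0:ℝ) < 1+w by linarith)]
  · -- LMR
    rw [iL u hu1, iM v hv1 hv2, iR w hw1]
    exact absurd (mixed_contra v w u q r hq hr (by linarith) (by linarith) (by linarith) (by linarith) (by linear_combination hprod) (by linear_combination he2)) not_false
  · -- LRL
    rw [iL u hu1, iR v hv1, iL w hw1]
    constructor
    · intro h; exact absurd h (by norm_num)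
    · rintro ⟨hA2, hB2⟩; exfalso; nlinarith [mul_pos (show (0:ℝ) < 1-u by linarith) (show (0:ℝ) < 1-w by linarith)]
  · -- LRM
    rw [iL u hu1, iR v hv1, iM w hw1 hw2]
    exact absurd (mixed_contra w v u q r hq hr (by linarith) (by linarith) (by linarith) (by linarith) (by linear_combination hprod) (by linear_combination he2)) not_false
  · -- LRR
    rw [iL u hu1, iR v hv1, iR w hw1]
    constructor
    · intro h; exact absurd h (by norm_num)
    · rintro ⟨hA2, hB2⟩; exfalso; nlinarith [mul_pos (show (0:ℝ) < 1+v by linarith) (show (0:ℝ) < 1+w by linarith)]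
  · -- MLL
    rw [iM u hu1 hu2, iL v hv1, iL w hw1]
    exact iff_of_true (by norm_num) ⟨by nlinarith [mul_pos (show (0:ℝ) < 1-v by linarith) (show (0:ℝ) < 1-w by linarith)], by nlinarith [mul_pos_of_neg_of_neg (show 1+v < (0:ℝ) by linarith) (show 1+w < (0:ℝ) by linarith)]⟩
  · -- MLM
    rw [iM u hu1 hu2, iL v hv1, iM w hw1 hw2]
    constructor
    · intro h; exact absurd h (by norm_num)
    · rintro ⟨hA2, hB2⟩; exfalso; nlinarith [mul_pos (show (0:ℝ) < 1+u by linarith) (show (0:ℝ) < 1+w by linarith)]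
  · -- MLR
    rw [iM u hu1 hu2, iL v hv1, iR w hw1]
    exact absurd (mixed_contra u w v q r hq hr (by linarith) (by linarith) (by linarith) (by linarith) (by linear_combination hprod) (by linear_combination he2)) not_false
  · -- MML
    rw [iM u hu1 hu2, iM v hv1 hv2, iL w hw1]
    constructor
    · intro h; exact absurd h (by norm_num)
    · rintro ⟨hA2, hB2⟩; exfalso; nlinarith [mul_pos (show (0:ℝ) < 1+u by linarith) (show (0:ℝ) < 1+v by linarith)]
  · -- MMM
    rw [iM u hu1 hu2, iM v hv1 hv2, iM w hw1 hw2]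
    exfalso
    exact absurd (cube_bound hu1 hu2 hv1 hv2 hw1 hw2) (by rw [hprod]; push_neg; linarith)
  · -- MMR
    rw [iM u hu1 hu2, iM v hv1 hv2, iR w hw1]
    constructor
    · intro h; exact absurd h (by norm_num)
    · rintro ⟨hA2, hB2⟩; exfalso; nlinarith [mul_pos (show (0:ℝ) < 1-u by linarith) (show (0:ℝ) < 1-v by linarith)]
  · -- MRL
    rw [iM u hu1 hu2, iR v hv1, iL w hw1]
    exact absurd (mixed_contra u v w q r hq hr (by linarith) (by linarith) (by linarith) (by linarith) (by linear_combination hprod) (by linear_combination he2)) not_false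
  · -- MRM
    rw [iM u hu1 hu2, iR v hv1, iM w hw1 hw2]
    constructor
    · intro h; exact absurd h (by norm_num)
    · rintro ⟨hA2, hB2⟩; exfalso; nlinarith [mul_pos (show (0:ℝ) < 1-u by linarith) (show (0:ℝ) < 1-w by linarith)]
  · -- MRR
    rw [iM u hu1 hu2, iR v hv1, iR w hw1]
    exact iff_of_true (by norm_num) ⟨by nlinarith [mul_pos_of_neg_of_neg (show 1-v < (0:ℝ) by linarith) (show 1-w < (0:ℝ) by linarith)], by nlinarith [mul_pos (show (0:ℝ) < 1+v by linarith) (show (0:ℝ) < 1+w by linarith)]⟩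
  · -- RLL
    rw [iR u hu1, iL v hv1, iL w hw1]
    constructor
    · intro h; exact absurd h (by norm_num)
    · rintro ⟨hA2, hB2⟩; exfalso; nlinarith [mul_pos (show (0:ℝ) < 1-v by linarith) (show (0:ℝ) < 1-w by linarith)]
  · -- RLM
    rw [iR u hu1, iL v hv1, iM w hw1 hw2]
    exact absurd (mixed_contra w u v q r hq hr (by linarith) (by linarith) (by linarith) (by linarith) (by linear_combination hprod) (by linear_combination he2)) not_false
  · -- RLR
    rw [iR u hu1, iL v hv1, iR w hw1]
    constructor
    · intro h; exact absurd h (by norm_num)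
    · rintro ⟨hA2, hB2⟩; exfalso; nlinarith [mul_pos (show (0:ℝ) < 1+u by linarith) (show (0:ℝ) < 1+w by linarith)]
  · -- RML
    rw [iR u hu1, iM v hv1 hv2, iL w hw1]
    exact absurd (mixed_contra v u w q r hq hr (by linarith) (by linarith) (by linarith) (by linarith) (by linear_combination hprod) (by linear_combination he2)) not_false
  · -- RMM
    rw [iR u hu1, iM v hv1 hv2, iM w hw1 hw2]
    constructor
    · intro h; exact absurd h (by norm_num)
    · rintro ⟨hA2, hB2⟩; exfalso; nlinarith [mul_pos (show (0:ℝ) < 1-v by linarith) (show (0:ℝ) < 1-w by linarith)]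
  · -- RMR
    rw [iR u hu1, iM v hv1 hv2, iR w hw1]
    exact iff_of_true (by norm_num) ⟨by nlinarith [mul_pos_of_neg_of_neg (show 1-u < (0:ℝ) by linarith) (show 1-w < (0:ℝ) by linarith)], by nlinarith [mul_pos (show (0:ℝ) < 1+u by linarith) (show (0:ℝ) < 1+w by linarith)]⟩
  · -- RRL
    rw [iR u hu1, iR v hv1, iL w hw1]
    constructor
    · intro h; exact absurd h (by norm_num)
    · rintro ⟨hA2, hB2⟩; exfalso; nlinarith [mul_pos (show (0:ℝ) < 1+u by linarith) (show (0:ℝ) < 1+v by linarith)]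
  · -- RRM
    rw [iR u hu1, iR v hv1, iM w hw1 hw2]
    exact iff_of_true (by norm_num) ⟨by nlinarith [mul_pos_of_neg_of_neg (show 1-u < (0:ℝ) by linarith) (show 1-v < (0:ℝ) by linarith)], by nlinarith [mul_pos (show (0:ℝ) < 1+u by linarith) (show (0:ℝ) < 1+v by linarith)]⟩
  · -- RRR
    rw [iR u hu1, iR v hv1, iR w hw1]
    constructor
    · intro h; exact absurd h (by norm_num)
    · rintro ⟨hA2, hB2⟩; exfalso; nlinarith [mul_pos_of_neg_of_neg (show 1-u < (0:ℝ) by linarith) (show 1-v < (0:ℝ) by linarith)]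



lemma auxC (a m r : ℝ) (hr : 1 ≤ r) (hm : 0 < m) (hm1 : m ≠ 1) (ha : |a| ≠ 1)
    (hprod : a * m = -r) :
    (((if |a| < 1 then 1 else 0) + (if m < 1 then 2 else 0) : ℕ) = 1
      ↔ 0 < 1 - a ∧ 0 < 1 + a) := by
  rcases lt_or_gt_of_ne hm1 with h | h
  · have ha1 : a < -1 := by
      by_contra h'
      push_neg at h'
      nlinarith [mul_nonneg (by linarith : (0:ℝ) ≤ a + 1) hm.le]
    rw [if_pos h, if_neg (by rw [abs_lt]; rintro ⟨h1, h2⟩; linarith)]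
    constructor
    · intro hcon; exact absurd hcon (by norm_num)
    · rintro ⟨h1, h2⟩; linarith
  · rw [if_neg (not_lt.mpr h.le)]
    rcases lt_or_gt_of_ne ha with h' | h'
    · rw [if_pos h']
      have := abs_lt.mp h'
      exact iff_of_true (by norm_num) ⟨by linarith [this.2], by linarith [this.1]⟩
    · rw [if_neg (not_lt.mpr h'.le)]
      constructor
      · intro hcon; exact absurd hcon (by norm_num)
      · rintro ⟨h1, h2⟩
        have : |a| < 1 := abs_lt.mpr ⟨by linarith, by linarith⟩
        linarith

lemma coreC (z t : ℂ) (r A B : ℤ) (hr : 1 ≤ r)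
    (him : z.im ≠ 0)
    (hprod : z * conj z * t = -((r : ℤ) : ℂ))
    (hA : (1 - z) * (1 - conj z) * (1 - t) = ((A : ℤ) : ℂ))
    (hB : (1 + z) * (1 + conj z) * (1 + t) = ((B : ℤ) : ℂ))
    (habs_z : ‖z‖ ≠ 1) (habs_t : ‖t‖ ≠ 1) :
    (((if ‖z‖ < 1 then 1 else 0) * 2 + (if ‖t‖ < 1 then 1 else 0) : ℕ) = 1
      ↔ 0 < A ∧ 0 < B) := by
  set m : ℝ := Complex.normSq z with hm
  have hz0 : z ≠ 0 := fun h => him (by simp [h])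
  have hmpos : 0 < m := Complex.normSq_pos.mpr hz0
  have hmul : z * conj z = (m : ℂ) := Complex.mul_conj z
  -- t is real
  have hmne : (m : ℂ) ≠ 0 := by exact_mod_cast hmpos.ne'
  set a : ℝ := -(r : ℝ) / m with hadef
  have hta : t = (a : ℂ) := by
    rw [hmul] at hprod
    rw [hadef]
    push_cast
    field_simp
    linear_combination hprod
  -- real product relation
  have hprodR : a * m = -(r : ℝ) := by
    rw [hadef]
    field_simp
  -- A = normSq (1-z) * (1-a)
  have h1z : (1 : ℂ) - z ≠ 0 := fun h => him (by
    have : z = 1 := by linear_combination -h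
    simp [this])
  have h1z' : (1 : ℂ) + z ≠ 0 := fun h => him (by
    have : z = -1 := by linear_combination h
    simp [this])
  have n1pos : 0 < Complex.normSq (1 - z) := Complex.normSq_pos.mpr h1z
  have n2pos : 0 < Complex.normSq (1 + z) := Complex.normSq_pos.mpr h1z'
  have hAr : (A : ℝ) = Complex.normSq (1 - z) * (1 - a) := by
    have e1 : (1 - z) * (1 - conj z) = ((Complex.normSq (1 - z) : ℝ) : ℂ) := by
      rw [← Complex.mul_conj (1 - z)]; simp
    rw [hta, e1] at hA
    exact_mod_cast hA.symm
  have hBr : (B : ℝ) = Complex.normSq (1 + z) * (1 + a) := by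
    have e1 : (1 + z) * (1 + conj z) = ((Complex.normSq (1 + z) : ℝ) : ℂ) := by
      rw [← Complex.mul_conj (1 + z)]; simp
    rw [hta, e1] at hB
    exact_mod_cast hB.symm
  have hAiff : 0 < A ↔ 0 < 1 - a := by
    rw [show (0 < A) ↔ ((0:ℝ) < (A:ℝ)) from by exact_mod_cast Iff.rfl, hAr]
    exact mul_pos_iff_of_pos_left n1pos
  have hBiff : 0 < B ↔ 0 < 1 + a := by
    rw [show (0 < B) ↔ ((0:ℝ) < (B:ℝ)) from by exact_mod_cast Iff.rfl, hBr]
    exact mul_pos_iff_of_pos_left n2pos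
  have habsm : ‖z‖ < 1 ↔ m < 1 := by
    rw [hm, ← Complex.sq_norm]
    constructor
    · intro h; nlinarith [norm_nonneg z]
    · intro h; nlinarith [norm_nonneg z]
  have hm1 : m ≠ 1 := by
    intro h
    apply habs_z
    have := Complex.sq_norm z
    rw [← hm] at this
    nlinarith [norm_nonneg z]
  have habsa : |a| ≠ 1 := by
    rw [hta] at habs_t
    simpa [Complex.norm_real] using habs_t
  have hcnt : ((if ‖z‖ < 1 then 1 else 0) * 2 + (if ‖t‖ < 1 then 1 else 0) : ℕ)
      = ((if |a| < 1 then 1 else 0) + (if m < 1 then 2 else 0) : ℕ) := by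
    rw [hta]
    simp only [Complex.norm_real, Real.norm_eq_abs]
    rw [if_congr habsm rfl rfl]
    split_ifs <;> norm_num
  rw [hcnt, auxC a m (r : ℝ) (by exact_mod_cast hr) hmpos hm1 habsa hprodR]
  exact and_congr hAiff.symm hBiff.symm

lemma core (z1 z2 z3 : ℂ) (q r A B : ℤ) (hq : 0 ≤ q) (hr : 1 ≤ r)
    (hprod : z1 * z2 * z3 = -((r : ℤ) : ℂ))
    (he2 : z1 * z2 + z1 * z3 + z2 * z3 = ((q : ℤ) : ℂ))
    (hA : (1 - z1) * (1 - z2) * (1 - z3) = ((A : ℤ) : ℂ))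
    (hB : (1 + z1) * (1 + z2) * (1 + z3) = ((B : ℤ) : ℂ))
    (hconj : ∀ w : ℂ, (w = z1 ∨ w = z2 ∨ w = z3) → (conj w = z1 ∨ conj w = z2 ∨ conj w = z3))
    (habs : ∀ w : ℂ, (w = z1 ∨ w = z2 ∨ w = z3) → ‖w‖ ≠ 1) :
    (((if ‖z1‖ < 1 then 1 else 0) + (if ‖z2‖ < 1 then 1 else 0)
        + (if ‖z3‖ < 1 then 1 else 0) : ℕ) = 1 ↔ 0 < A ∧ 0 < B) := by
  by_cases h1 : z1.im = 0
  · by_cases h2 : z2.im = 0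
    · by_cases h3 : z3.im = 0
      · -- all real
        have e1 : z1 = ((z1.re : ℝ) : ℂ) := by apply Complex.ext <;> simp [h1]
        have e2 : z2 = ((z2.re : ℝ) : ℂ) := by apply Complex.ext <;> simp [h2]
        have e3 : z3 = ((z3.re : ℝ) : ℂ) := by apply Complex.ext <;> simp [h3]
        set a := z1.re; set b := z2.re; set c := z3.re
        rw [e1, e2, e3] at hprod he2 hA hB ⊢
        have hprodR : a * b * c = -(r : ℝ) := by exact_mod_cast hprod
        have he2R : a * b + a * c + b * c = (q : ℝ) := by exact_mod_cast he2
        have hAR : (1 - a) * (1 - b) * (1 - c) = (A : ℝ) := by exact_mod_cast hA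
        have hBR : (1 + a) * (1 + b) * (1 + c) = (B : ℝ) := by exact_mod_cast hB
        have ha : |a| ≠ 1 := by
          have := habs z1 (Or.inl rfl); rw [e1] at this; simpa using this
        have hb : |b| ≠ 1 := by
          have := habs z2 (Or.inr (Or.inl rfl)); rw [e2] at this; simpa using this
        have hc : |c| ≠ 1 := by
          have := habs z3 (Or.inr (Or.inr rfl)); rw [e3] at this; simpa using this
        simp only [Complex.norm_real, Real.norm_eq_abs]
        rw [aux3 a b c (q:ℝ) (r:ℝ) (by exact_mod_cast hq) (by exact_mod_cast hr) hprodR he2R ha hb hc,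
          hAR, hBR]
        constructor
        · rintro ⟨x, y⟩; exact ⟨by exact_mod_cast x, by exact_mod_cast y⟩
        · rintro ⟨x, y⟩; exact ⟨by exact_mod_cast x, by exact_mod_cast y⟩
      · -- z3 not real: contradiction
        exfalso
        rcases hconj z3 (Or.inr (Or.inr rfl)) with h | h | h
        · apply h3
          have hh := congrArg Complex.im h
          simp only [Complex.conj_im] at hh
          rw [h1] at hh; linarith
        · apply h3
          have hh := congrArg Complex.im h
          simp only [Complex.conj_im] at hh
          rw [h2] at hh; linarith
        · exact h3 (Complex.conj_eq_iff_im.mp h)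
    · -- z2 not real; conj z2 = z3
      rcases hconj z2 (Or.inr (Or.inl rfl)) with h | h | h
      · exact absurd (by rw [← h]; simp : z1.im = -z2.im) (by rw [h1]; simpa using h2)
      · exact absurd (Complex.conj_eq_iff_im.mp h) h2
      · rw [← h] at hprod hA hB ⊢
        have key := coreC z2 z1 r A B hr h2
          (by linear_combination hprod) (by linear_combination hA) (by linear_combination hB)
          (habs z2 (Or.inr (Or.inl rfl))) (habs z1 (Or.inl rfl))
        simp only [Complex.norm_conj] at key ⊢
        rw [← key]
        constructor <;> intro hx <;> omega
  · -- z1 not real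
    rcases hconj z1 (Or.inl rfl) with h | h | h
    · exact absurd (Complex.conj_eq_iff_im.mp h) h1
    · rw [← h] at hprod hA hB ⊢
      have key := coreC z1 z3 r A B hr h1
        (by linear_combination hprod) (by linear_combination hA) (by linear_combination hB)
        (habs z1 (Or.inl rfl)) (habs z3 (Or.inr (Or.inr rfl)))
      simp only [Complex.norm_conj] at key ⊢
      rw [← key]
      constructor <;> intro hx <;> omega
    · rw [← h] at hprod hA hB ⊢
      have key := coreC z1 z2 r A B hr h1
        (by linear_combination hprod) (by linear_combination hA) (by linear_combination hB)
        (habs z1 (Or.inl rfl)) (habs z2 (Or.inr (Or.inl rfl)))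
      simp only [Complex.norm_conj] at key ⊢
      rw [← key]
      constructor <;> intro hx <;> omega

/-- Schur–Cohn criterion for `x³ - p x² + q x + r`: assuming no root on the unit circle,
exactly one root lies strictly inside the unit circle iff `|p - r| < q + 1`. -/
theorem stmt_8 (p q r : ℤ) (hp : 0 ≤ p) (hq : 0 ≤ q) (hr : 1 ≤ r)
    (hpq : ¬(p = 0 ∧ q = 0))
    (hcirc : ∀ z : ℂ,
      (X ^ 3 - C (p : ℂ) * X ^ 2 + C (q : ℂ) * X + C (r : ℂ)).IsRoot z →
      ‖z‖ ≠ 1) :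
    Multiset.card
        (((X ^ 3 - C (p : ℂ) * X ^ 2 + C (q : ℂ) * X + C (r : ℂ)).roots).filter
          (fun z => ‖z‖ < 1)) = 1 ↔
      |p - r| < q + 1 := by
  set P : ℂ[X] := X ^ 3 - C (p : ℂ) * X ^ 2 + C (q : ℂ) * X + C (r : ℂ) with hP
  have hmonic : P.Monic := by
    unfold P
    monicity!
  have hdeg : P.natDegree = 3 := by
    unfold P
    compute_degree!
  have hsplits : P.Splits := IsAlgClosed.splits P
  have hcard : Multiset.card P.roots = 3 := by
    rw [Polynomial.splits_iff_card_roots.mp hsplits, hdeg]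
  obtain ⟨z1, z2, z3, hroots⟩ := Multiset.card_eq_three.mp hcard
  have hfact : P = (X - C z1) * ((X - C z2) * (X - C z3)) := by
    have := hsplits.eq_prod_roots_of_monic hmonic
    rw [hroots] at this
    simpa [Multiset.map_cons, Multiset.prod_cons, mul_assoc] using this
  have heval : ∀ t : ℂ, t ^ 3 - (p : ℂ) * t ^ 2 + (q : ℂ) * t + (r : ℂ)
      = (t - z1) * ((t - z2) * (t - z3)) := by
    intro t
    have h := congrArg (Polynomial.eval t) hfact
    simpa [hP] using h
  have hprod : z1 * z2 * z3 = -((r : ℤ) : ℂ) := by linear_combination heval 0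
  have he2 : z1 * z2 + z1 * z3 + z2 * z3 = ((q : ℤ) : ℂ) := by
    linear_combination (heval (-1) - heval 1) / 2
  have hA : (1 - z1) * (1 - z2) * (1 - z3) = ((1 - p + q + r : ℤ) : ℂ) := by
    push_cast
    linear_combination -heval 1
  have hB : (1 + z1) * (1 + z2) * (1 + z3) = ((1 + p + q - r : ℤ) : ℂ) := by
    push_cast
    linear_combination heval (-1)
  have hmem : ∀ t : ℂ, t ^ 3 - (p : ℂ) * t ^ 2 + (q : ℂ) * t + (r : ℂ) = 0
      ↔ (t = z1 ∨ t = z2 ∨ t = z3) := by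
    intro t
    rw [heval t]
    simp [mul_eq_zero, sub_eq_zero]
  have hconjroot : ∀ w : ℂ, (w = z1 ∨ w = z2 ∨ w = z3) →
      (conj w = z1 ∨ conj w = z2 ∨ conj w = z3) := by
    intro w hw
    rw [← hmem] at hw ⊢
    have h' := congrArg (starRingEnd ℂ) hw
    simpa [map_add, map_sub, map_mul, map_pow, map_intCast] using h'
  have habs : ∀ w : ℂ, (w = z1 ∨ w = z2 ∨ w = z3) → ‖w‖ ≠ 1 := by
    intro w hw
    apply hcirc
    show P.eval w = 0
    rw [hP]
    simpa using (hmem w).mpr hw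
  have hcount : Multiset.card (Multiset.filter (fun z => ‖z‖ < 1) P.roots)
      = ((if ‖z1‖ < 1 then 1 else 0) + (if ‖z2‖ < 1 then 1 else 0)
        + (if ‖z3‖ < 1 then 1 else 0) : ℕ) := by
    rw [hroots]
    simp only [Multiset.insert_eq_cons, Multiset.filter_cons, Multiset.filter_singleton,
      Multiset.card_add, apply_ite Multiset.card, Multiset.card_singleton, Multiset.card_zero]
    split_ifs <;> norm_num
  rw [hcount, core z1 z2 z3 q r (1 - p + q + r) (1 + p + q - r) hq hr hprod he2 hA hB hconjroot habs]
  rw [abs_lt]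
  omega
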